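/- arXiv:2007.03964 — 2 statements merged into one kernel-verified Lean document; each statement's English description precedes it below -/
import Mathlib

section
/- Let E be a finite-dimensional real inner product space, let f, g : E → ℝ be twice continuously differentiable, and let α, γ ∈ ℝ. Suppose x : ℝ → E is twice differentiable and λ : ℝ → ℝ is differentiable, and for every t they satisfy the integral-derivative multiplier method equations ẋ(t) = -∇f(x(t)) - λ(t)·∇g(x(t)) and λ̇(t) = α·g(x(t)) + γ·(d²/dt²)[g(x(t))]. Then for every t, B(t)(ẍ(t)) + A(t)(ẋ(t)) + (α·g(x(t)) + γ·⟨ẋ(t), ∇²g(x(t))(ẋ(t))⟩)·∇g(x(t)) = 0, where A(t) = ∇²f(x(t)) + λ(t)·∇²g(x(t)) and B(t) = I + γ·∇g(x(t))∇g(x(t))ᵀ. -/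
open RealInnerProductSpace

/-- Second-order dynamics of the integral-derivative multiplier method:
if `ẋ = -∇f(x) - λ·∇g(x)` and `λ̇ = α·g(x) + γ·(d²/dt²)[g(x)]`, then
`B(ẍ) + A(ẋ) + (α·g(x) + γ·⟨ẋ, ∇²g(x)(ẋ)⟩)·∇g(x) = 0`,
where `A = ∇²f(x) + λ·∇²g(x)` and `B = I + γ·∇g(x)∇g(x)ᵀ`. -/
theorem integral_derivative_multiplier_dynamics
    {E : Type*} [NormedAddCommGroup E] [InnerProductSpace ℝ E] [FiniteDimensional ℝ E]
    (f g : E → ℝ) (hf : ContDiff ℝ 2 f) (hg : ContDiff ℝ 2 g)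
    (α γ : ℝ) (x : ℝ → E) (lam : ℝ → ℝ)
    (hx : Differentiable ℝ x) (hx' : Differentiable ℝ (deriv x))
    (hlam : Differentiable ℝ lam)
    (hode1 : ∀ t, deriv x t = -gradient f (x t) - lam t • gradient g (x t))
    (hode2 : ∀ t, deriv lam t
        = α * g (x t) + γ * deriv (deriv (fun s => g (x s))) t) :
    ∀ t, (deriv (deriv x) t
            + (γ * ⟪gradient g (x t), deriv (deriv x) t⟫) • gradient g (x t))
        + (fderiv ℝ (gradient f) (x t) (deriv x t)
            + lam t • fderiv ℝ (gradient g) (x t) (deriv x t))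
        + (α * g (x t)
            + γ * ⟪deriv x t, fderiv ℝ (gradient g) (x t) (deriv x t)⟫)
          • gradient g (x t) = 0 := by
  intro t
  -- gradient maps are C¹
  have hgradf : ContDiff ℝ 1 (gradient f) := by
    have h1 : ContDiff ℝ 1 (fderiv ℝ f) := hf.fderiv_right (by norm_num)
    exact ((InnerProductSpace.toDual ℝ E).symm.contDiff).comp h1
  have hgradg : ContDiff ℝ 1 (gradient g) := by
    have h1 : ContDiff ℝ 1 (fderiv ℝ g) := hg.fderiv_right (by norm_num)
    exact ((InnerProductSpace.toDual ℝ E).symm.contDiff).comp h1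
  have hxd : ∀ s, HasDerivAt x (deriv x s) s := fun s => (hx s).hasDerivAt
  -- derivative of s ↦ gradient g (x s)
  have hGg : ∀ s, HasDerivAt (fun s => gradient g (x s))
      (fderiv ℝ (gradient g) (x s) (deriv x s)) s := fun s =>
    ((hgradg.differentiable (by norm_num)) (x s)).hasFDerivAt.comp_hasDerivAt s (hxd s)
  have hGf : ∀ s, HasDerivAt (fun s => gradient f (x s))
      (fderiv ℝ (gradient f) (x s) (deriv x s)) s := fun s =>
    ((hgradf.differentiable (by norm_num)) (x s)).hasFDerivAt.comp_hasDerivAt s (hxd s)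
  -- first derivative of g ∘ x
  have h1 : ∀ s, HasDerivAt (fun s => g (x s)) ⟪gradient g (x s), deriv x s⟫ s := by
    intro s
    have hd : DifferentiableAt ℝ g (x s) := (hg.differentiable (by norm_num)) (x s)
    have := hd.hasGradientAt.hasFDerivAt.comp_hasDerivAt s (hxd s)
    simpa [InnerProductSpace.toDual_apply_apply, Function.comp_def] using this
  have hgx1 : deriv (fun s => g (x s)) = fun s => ⟪gradient g (x s), deriv x s⟫ :=
    funext fun s => (h1 s).deriv
  -- second derivative of g ∘ x
  have h2 : HasDerivAt (fun s => ⟪gradient g (x s), deriv x s⟫)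
      (⟪gradient g (x t), deriv (deriv x) t⟫
        + ⟪fderiv ℝ (gradient g) (x t) (deriv x t), deriv x t⟫) t :=
    (hGg t).inner ℝ (hx' t).hasDerivAt
  have hsec : deriv (deriv (fun s => g (x s))) t
      = ⟪gradient g (x t), deriv (deriv x) t⟫
        + ⟪fderiv ℝ (gradient g) (x t) (deriv x t), deriv x t⟫ := by
    rw [hgx1]; exact h2.deriv
  -- differentiate the first ODE
  have hRHS : HasDerivAt (fun s => -gradient f (x s) - lam s • gradient g (x s))
      (-(fderiv ℝ (gradient f) (x t) (deriv x t))
        - (lam t • fderiv ℝ (gradient g) (x t) (deriv x t)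
            + deriv lam t • gradient g (x t))) t :=
    (hGf t).neg.sub (((hlam t).hasDerivAt).smul (hGg t))
  have hxfun : deriv x = fun s => -gradient f (x s) - lam s • gradient g (x s) :=
    funext hode1
  have hEq : deriv (deriv x) t
      = -(fderiv ℝ (gradient f) (x t) (deriv x t))
        - (lam t • fderiv ℝ (gradient g) (x t) (deriv x t)
            + deriv lam t • gradient g (x t)) := by
    have h := hRHS.deriv
    rw [← hxfun] at h
    exact h
  rw [hode2 t, hsec] at hEq
  have hcomm : ⟪deriv x t, fderiv ℝ (gradient g) (x t) (deriv x t)⟫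
      = ⟪fderiv ℝ (gradient g) (x t) (deriv x t), deriv x t⟫ := real_inner_comm _ _
  rw [hcomm]
  linear_combination (norm := module) hEq
end

section
/- Let E be a finite-dimensional real inner product space, let f, g : E → ℝ be twice continuously differentiable, and let α, β, γ ∈ ℝ. Suppose x : ℝ → E is twice differentiable and λ : ℝ → ℝ is differentiable, and for every t they satisfy the proportional-integral-derivative multiplier method equations ẋ(t) = -∇f(x(t)) - λ(t)·∇g(x(t)) and λ̇(t) = α·g(x(t)) + β·(d/dt)[g(x(t))] + γ·(d²/dt²)[g(x(t))]. Then for every t, B(t)(ẍ(t)) + (A(t) + β·∇g(x(t))∇g(x(t))ᵀ)(ẋ(t)) + (α·g(x(t)) + γ·⟨ẋ(t), ∇²g(x(t))(ẋ(t))⟩)·∇g(x(t)) = 0, where A(t) = ∇²f(x(t)) + λ(t)·∇²g(x(t)) and B(t) = I + γ·∇g(x(t))∇g(x(t))ᵀ. -/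
open RealInnerProductSpace

/-- Second-order dynamics of the proportional-integral-derivative multiplier method:
if `ẋ = -∇f(x) - λ·∇g(x)` and `λ̇ = α·g(x) + β·(d/dt)[g(x)] + γ·(d²/dt²)[g(x)]`, then
`B(ẍ) + (A + β·∇g∇gᵀ)(ẋ) + (α·g(x) + γ·⟨ẋ, ∇²g(x)(ẋ)⟩)·∇g(x) = 0`,
where `A = ∇²f(x) + λ·∇²g(x)` and `B = I + γ·∇g(x)∇g(x)ᵀ`. -/
theorem pid_multiplier_dynamics
    {E : Type*} [NormedAddCommGroup E] [InnerProductSpace ℝ E] [FiniteDimensional ℝ E]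
    (f g : E → ℝ) (hf : ContDiff ℝ 2 f) (hg : ContDiff ℝ 2 g)
    (α β γ : ℝ) (x : ℝ → E) (lam : ℝ → ℝ)
    (hx : Differentiable ℝ x) (hx' : Differentiable ℝ (deriv x))
    (hlam : Differentiable ℝ lam)
    (hode1 : ∀ t, deriv x t = -gradient f (x t) - lam t • gradient g (x t))
    (hode2 : ∀ t, deriv lam t
        = α * g (x t) + β * deriv (fun s => g (x s)) t
          + γ * deriv (deriv (fun s => g (x s))) t) :
    ∀ t, (deriv (deriv x) t
            + (γ * ⟪gradient g (x t), deriv (deriv x) t⟫) • gradient g (x t))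
        + (fderiv ℝ (gradient f) (x t) (deriv x t)
            + lam t • fderiv ℝ (gradient g) (x t) (deriv x t)
            + (β * ⟪gradient g (x t), deriv x t⟫) • gradient g (x t))
        + (α * g (x t)
            + γ * ⟪deriv x t, fderiv ℝ (gradient g) (x t) (deriv x t)⟫)
          • gradient g (x t) = 0 := by
  intro t
  -- gradient as composition with toDual.symm
  have hgradf : gradient f = fun y => (InnerProductSpace.toDual ℝ E).symm (fderiv ℝ f y) := rfl
  have hgradg : gradient g = fun y => (InnerProductSpace.toDual ℝ E).symm (fderiv ℝ g y) := rfl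
  have hGf : ContDiff ℝ 1 (gradient f) := by
    rw [hgradf]
    exact (InnerProductSpace.toDual ℝ E).symm.toContinuousLinearEquiv.contDiff.comp
      (hf.fderiv_right (by norm_num))
  have hGg : ContDiff ℝ 1 (gradient g) := by
    rw [hgradg]
    exact (InnerProductSpace.toDual ℝ E).symm.toContinuousLinearEquiv.contDiff.comp
      (hg.fderiv_right (by norm_num))
  have hinnerg : ∀ y v, fderiv ℝ g y v = ⟪gradient g y, v⟫ := fun y v =>
    (InnerProductSpace.toDual_symm_apply).symm
  -- derivative of t ↦ gradient g (x t) etc.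
  have hGfx : HasDerivAt (fun s => gradient f (x s))
      (fderiv ℝ (gradient f) (x t) (deriv x t)) t :=
    ((hGf.differentiable one_ne_zero (x t)).hasFDerivAt).comp_hasDerivAt t (hx t).hasDerivAt
  have hGgx : HasDerivAt (fun s => gradient g (x s))
      (fderiv ℝ (gradient g) (x t) (deriv x t)) t :=
    ((hGg.differentiable one_ne_zero (x t)).hasFDerivAt).comp_hasDerivAt t (hx t).hasDerivAt
  -- first derivative of g ∘ x, for all s
  have hgx : ∀ s, HasDerivAt (fun s => g (x s)) (⟪gradient g (x s), deriv x s⟫) s := by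
    intro s
    have := ((hg.differentiable (by norm_num) (x s)).hasFDerivAt).comp_hasDerivAt s
      (hx s).hasDerivAt
    rwa [hinnerg] at this
  have hderivgx : deriv (fun s => g (x s)) = fun s => ⟪gradient g (x s), deriv x s⟫ :=
    funext fun s => (hgx s).deriv
  -- second derivative of g ∘ x at t
  have hgx2 : HasDerivAt (fun s => ⟪gradient g (x s), deriv x s⟫)
      (⟪gradient g (x t), deriv (deriv x) t⟫
        + ⟪fderiv ℝ (gradient g) (x t) (deriv x t), deriv x t⟫) t :=
    hGgx.inner ℝ (hx' t).hasDerivAt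
  have hderiv2 : deriv (deriv (fun s => g (x s))) t
      = ⟪gradient g (x t), deriv (deriv x) t⟫
        + ⟪fderiv ℝ (gradient g) (x t) (deriv x t), deriv x t⟫ := by
    rw [hderivgx]; exact hgx2.deriv
  -- second derivative of x from ode1
  have hxx : deriv (deriv x) t
      = -(fderiv ℝ (gradient f) (x t) (deriv x t))
        - (deriv lam t • gradient g (x t)
            + lam t • fderiv ℝ (gradient g) (x t) (deriv x t)) := by
    have hd : HasDerivAt (fun s => -gradient f (x s) - lam s • gradient g (x s))
        (-(fderiv ℝ (gradient f) (x t) (deriv x t))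
          - (lam t • fderiv ℝ (gradient g) (x t) (deriv x t)
              + deriv lam t • gradient g (x t))) t :=
      hGfx.neg.sub ((hlam t).hasDerivAt.smul hGgx)
    have heq : deriv x = fun s => -gradient f (x s) - lam s • gradient g (x s) :=
      funext hode1
    conv_lhs => rw [heq]
    rw [hd.deriv]
    module
  -- scalar identity from ode2
  have hldot : deriv lam t
      = α * g (x t) + β * ⟪gradient g (x t), deriv x t⟫
        + γ * (⟪gradient g (x t), deriv (deriv x) t⟫
            + ⟪fderiv ℝ (gradient g) (x t) (deriv x t), deriv x t⟫) := by
    rw [hode2 t, hderiv2, hderivgx]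
  have hsym : ⟪deriv x t, fderiv ℝ (gradient g) (x t) (deriv x t)⟫
      = ⟪fderiv ℝ (gradient g) (x t) (deriv x t), deriv x t⟫ := real_inner_comm _ _
  rw [hsym]
  have key : deriv (deriv x) t + fderiv ℝ (gradient f) (x t) (deriv x t)
      + lam t • fderiv ℝ (gradient g) (x t) (deriv x t)
      + deriv lam t • gradient g (x t) = 0 := by
    rw [hxx]; module
  have hsc : γ * ⟪gradient g (x t), deriv (deriv x) t⟫
      + β * ⟪gradient g (x t), deriv x t⟫
      + (α * g (x t) + γ * ⟪fderiv ℝ (gradient g) (x t) (deriv x t), deriv x t⟫)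
      = deriv lam t := by rw [hldot]; ring
  have expand : (deriv (deriv x) t
            + (γ * ⟪gradient g (x t), deriv (deriv x) t⟫) • gradient g (x t))
        + (fderiv ℝ (gradient f) (x t) (deriv x t)
            + lam t • fderiv ℝ (gradient g) (x t) (deriv x t)
            + (β * ⟪gradient g (x t), deriv x t⟫) • gradient g (x t))
        + (α * g (x t)
            + γ * ⟪fderiv ℝ (gradient g) (x t) (deriv x t), deriv x t⟫)
          • gradient g (x t)
      = deriv (deriv x) t + fderiv ℝ (gradient f) (x t) (deriv x t)
          + lam t • fderiv ℝ (gradient g) (x t) (deriv x t)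
          + (γ * ⟪gradient g (x t), deriv (deriv x) t⟫
              + β * ⟪gradient g (x t), deriv x t⟫
              + (α * g (x t)
                  + γ * ⟪fderiv ℝ (gradient g) (x t) (deriv x t), deriv x t⟫))
            • gradient g (x t) := by module
  rw [expand, hsc, key]
end
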